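/- Let f : ℝ^D → ℝ be twice continuously differentiable with γ_H-Lipschitz Hessian, let X be a finite set of points in ℝ^D, and let xᵢ ∈ X. Then the gradient ∇f(xᵢ) belongs to the polytopic gradient set 𝒢⁽ⁱ⁾ = { g ∈ ℝ^D : for every xⱼ ∈ X \ {xᵢ}, both ⟨g, uᵢⱼ⟩ ≤ g̃ᵢⱼ + (1/2)·μᵢⱼ·‖H(xᵢ)‖ + (1/6)·μᵢⱼ²·γ_H and −⟨g, uᵢⱼ⟩ ≤ −g̃ᵢⱼ + (1/2)·μᵢⱼ·‖H(xᵢ)‖ + (1/6)·μᵢⱼ²·γ_H }. -/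

import Mathlib

open Set

lemma taylor_key {E : Type*} [NormedAddCommGroup E] [NormedSpace ℝ E]
    (f : E → ℝ) (hf : ContDiff ℝ 2 f) (γH : ℝ)
    (hLip : ∀ x₁ x₂ : E,
      ‖iteratedFDeriv ℝ 2 f x₁ - iteratedFDeriv ℝ 2 f x₂‖ ≤ γH * ‖x₁ - x₂‖)
    (x v : E) :
    |f (x + v) - f x - fderiv ℝ f x v| ≤
      (1/2) * ‖iteratedFDeriv ℝ 2 f x‖ * ‖v‖^2 + (1/6) * γH * ‖v‖^3 := by
  have hF : ContDiff ℝ 1 (fderiv ℝ f) := hf.fderiv_right (le_refl 2)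
  set F := fderiv ℝ f with hFdef
  set G := fun y => fderiv ℝ F y with hGdef
  -- line
  have hline : ∀ t : ℝ, HasDerivAt (fun s : ℝ => x + s • v) v t := fun t => by
    simpa using ((hasDerivAt_id t).smul_const v).const_add x
  set φ := fun s : ℝ => f (x + s • v) with hφdef
  set φ' := fun s : ℝ => F (x + s • v) v with hφ'def
  set φ'' := fun s : ℝ => G (x + s • v) v v with hφ''def
  have hdφ : ∀ t : ℝ, HasDerivAt φ (φ' t) t := fun t => by
    exact ((hf.differentiable (by norm_num) (x + t • v)).hasFDerivAt).comp_hasDerivAt t (hline t)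
  have hdφ' : ∀ t : ℝ, HasDerivAt φ' (φ'' t) t := fun t => by
    have h2 : HasDerivAt (fun s : ℝ => F (x + s • v)) (G (x + t • v) v) t :=
      ((hF.differentiable (by norm_num) (x + t • v)).hasFDerivAt).comp_hasDerivAt t (hline t)
    exact ((ContinuousLinearMap.apply ℝ ℝ v).hasFDerivAt).comp_hasDerivAt t h2
  -- bound on |φ'' t - φ'' 0|
  have hsecond : ∀ y : E, G y v v = iteratedFDeriv ℝ 2 f y ![v, v] := by
    intro y; rw [iteratedFDeriv_two_apply]; simp; rfl
  have hφ''lip : ∀ t : ℝ, 0 ≤ t → |φ'' t - φ'' 0| ≤ γH * ‖v‖^3 * t := by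
    intro t ht
    have : φ'' t - φ'' 0 =
        (iteratedFDeriv ℝ 2 f (x + t • v) - iteratedFDeriv ℝ 2 f (x + (0:ℝ) • v)) ![v, v] := by
      simp [hφ''def, hsecond]
    rw [this]
    calc |((iteratedFDeriv ℝ 2 f (x + t • v) - iteratedFDeriv ℝ 2 f (x + (0:ℝ) • v)) ![v, v])|
        ≤ ‖iteratedFDeriv ℝ 2 f (x + t • v) - iteratedFDeriv ℝ 2 f (x + (0:ℝ) • v)‖ * ∏ i, ‖(![v,v]) i‖ :=
          (iteratedFDeriv ℝ 2 f (x + t • v) - iteratedFDeriv ℝ 2 f (x + (0:ℝ) • v)).le_opNorm _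
      _ ≤ (γH * ‖x + t • v - (x + (0:ℝ) • v)‖) * ∏ i, ‖(![v,v]) i‖ := by
          apply mul_le_mul_of_nonneg_right (hLip _ _)
          positivity
      _ = γH * ‖v‖^3 * t := by
          have : x + t • v - (x + (0:ℝ) • v) = t • v := by
            simp
          rw [this, norm_smul]
          simp [Fin.prod_univ_two, abs_of_nonneg ht]
          ring
  have hφ''0 : |φ'' 0| ≤ ‖iteratedFDeriv ℝ 2 f x‖ * ‖v‖^2 := by
    have h0 : φ'' 0 = iteratedFDeriv ℝ 2 f x ![v, v] := by
      have h := hsecond x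
      simp only [hφ''def, zero_smul, add_zero]
      exact h
    rw [h0]
    calc |iteratedFDeriv ℝ 2 f x ![v, v]| ≤ ‖iteratedFDeriv ℝ 2 f x‖ * ∏ i, ‖(![v,v]) i‖ :=
          (iteratedFDeriv ℝ 2 f x).le_opNorm _
      _ = ‖iteratedFDeriv ℝ 2 f x‖ * ‖v‖^2 := by
          rw [Fin.prod_univ_two]
          simp only [Matrix.cons_val_zero, Matrix.cons_val_one, Matrix.head_cons]
          ring
  -- ψ and its derivatives
  set c := φ'' 0 with hcdef
  set ψ := fun t : ℝ => φ t - φ 0 - t * φ' 0 - t^2/2 * c with hψdef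
  set ψ' := fun t : ℝ => φ' t - φ' 0 - t * c with hψ'def
  have hdψ : ∀ t : ℝ, HasDerivAt ψ (ψ' t) t := fun t => by
    have := (((hdφ t).sub_const (φ 0)).sub ((hasDerivAt_id t).mul_const (φ' 0))).sub
      (((hasDerivAt_pow 2 t).div_const 2).mul_const c)
    refine this.congr_deriv ?_
    simp only [hψ'def]
    norm_num
  have hdψ' : ∀ t : ℝ, HasDerivAt ψ' (φ'' t - c) t := fun t => by
    have := ((hdφ' t).sub_const (φ' 0)).sub ((hasDerivAt_id t).mul_const c)
    exact this.congr_deriv (by ring)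
  -- first fencing: |ψ' t| ≤ γH ‖v‖³ t²/2 on [0,1]
  have step1 : ∀ t ∈ Icc (0:ℝ) 1, |ψ' t| ≤ γH * ‖v‖^3 * t^2 / 2 := by
    intro t ht
    have := image_norm_le_of_norm_deriv_right_le_deriv_boundary
      (f := ψ') (f' := fun t => φ'' t - c) (a := 0) (b := 1)
      (fun s _ => (hdψ' s).continuousAt.continuousWithinAt)
      (fun s _ => (hdψ' s).hasDerivWithinAt.mono (fun y hy => hy))
      (B := fun t => γH * ‖v‖^3 * t^2 / 2) (B' := fun t => γH * ‖v‖^3 * t)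
      (by simp [hψ'def])
      (fun s => by
        have := ((hasDerivAt_pow 2 s).const_mul (γH * ‖v‖^3)).div_const 2
        refine this.congr_deriv ?_; norm_num; ring)
      (fun s hs => by
        simpa [hcdef] using hφ''lip s hs.1)
    exact this ht
  -- second fencing: |ψ 1| ≤ γH ‖v‖³ /6
  have step2 : |ψ 1| ≤ γH * ‖v‖^3 / 6 := by
    have := image_norm_le_of_norm_deriv_right_le_deriv_boundary
      (f := ψ) (f' := ψ') (a := 0) (b := 1)
      (fun s _ => (hdψ s).continuousAt.continuousWithinAt)
      (fun s _ => (hdψ s).hasDerivWithinAt.mono (fun y hy => hy))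
      (B := fun t => γH * ‖v‖^3 * t^3 / 6) (B' := fun t => γH * ‖v‖^3 * t^2 / 2)
      (by simp [hψdef])
      (fun s => by
        have := ((hasDerivAt_pow 3 s).const_mul (γH * ‖v‖^3)).div_const 6
        refine this.congr_deriv ?_; norm_num; ring)
      (fun s hs => step1 s ⟨hs.1, hs.2.le⟩)
    simpa using this (right_mem_Icc.2 zero_le_one)
  -- conclude
  have hψ1 : ψ 1 = f (x + v) - f x - fderiv ℝ f x v - c/2 := by
    simp [hψdef, hφdef, hφ'def, hFdef]
    ring
  have : |f (x + v) - f x - fderiv ℝ f x v| ≤ |ψ 1| + |c|/2 := by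
    have : f (x + v) - f x - fderiv ℝ f x v = ψ 1 + c/2 := by rw [hψ1]; ring
    rw [this]
    calc |ψ 1 + c/2| ≤ |ψ 1| + |c/2| := abs_add_le _ _
      _ = |ψ 1| + |c|/2 := by rw [abs_div]; simp
  refine this.trans ?_
  have := hφ''0
  nlinarith [step2, hφ''0]


/-- The true gradient belongs to the polytopic gradient set
(Theorem 1 of the paper, noiseless case). -/
theorem sage_gradient_in_polytope
    {D : ℕ} (hD : 1 ≤ D)
    (f : EuclideanSpace ℝ (Fin D) → ℝ)
    (hf : ContDiff ℝ 2 f)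
    (γH : ℝ) (hγH : 0 ≤ γH)
    (hLip : ∀ x₁ x₂ : EuclideanSpace ℝ (Fin D),
      ‖iteratedFDeriv ℝ 2 f x₁ - iteratedFDeriv ℝ 2 f x₂‖ ≤ γH * ‖x₁ - x₂‖)
    (X : Finset (EuclideanSpace ℝ (Fin D)))
    (xi : EuclideanSpace ℝ (Fin D)) (hxi : xi ∈ X) :
    gradient f xi ∈
      { g : EuclideanSpace ℝ (Fin D) |
        ∀ xj ∈ X, xj ≠ xi →
          (inner ℝ g ((‖xj - xi‖)⁻¹ • (xj - xi)) : ℝ) ≤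
              (f xj - f xi) / ‖xj - xi‖ +
                (1 / 2) * ‖xj - xi‖ * ‖iteratedFDeriv ℝ 2 f xi‖ +
                (1 / 6) * ‖xj - xi‖ ^ 2 * γH ∧
          -(inner ℝ g ((‖xj - xi‖)⁻¹ • (xj - xi)) : ℝ) ≤
              -((f xj - f xi) / ‖xj - xi‖) +
                (1 / 2) * ‖xj - xi‖ * ‖iteratedFDeriv ℝ 2 f xi‖ +
                (1 / 6) * ‖xj - xi‖ ^ 2 * γH } := by
  intro xj _ hne
  set v := xj - xi with hv
  have hμ : (0:ℝ) < ‖v‖ := by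
    rw [norm_pos_iff]
    exact sub_ne_zero.2 hne
  have hkey := taylor_key f hf γH hLip xi v
  have hxjv : xi + v = xj := by simp [hv]
  rw [hxjv] at hkey
  have hinner : (inner ℝ (gradient f xi) ((‖v‖)⁻¹ • v) : ℝ) = (‖v‖)⁻¹ * fderiv ℝ f xi v := by
    rw [real_inner_smul_right]
    congr 1
    exact InnerProductSpace.toDual_symm_apply
  rw [hinner]
  rw [abs_le] at hkey
  obtain ⟨h1, h2⟩ := hkey
  constructor
  · rw [inv_mul_eq_div, div_add' _ _ _ hμ.ne', div_add' _ _ _ hμ.ne',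
      div_le_div_iff₀ hμ hμ]
    nlinarith [hμ.le]
  · rw [inv_mul_eq_div, ← neg_div, ← neg_div, div_add' _ _ _ hμ.ne',
      div_add' _ _ _ hμ.ne', div_le_div_iff₀ hμ hμ]
    nlinarith [hμ.le]
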